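/- Let A be a finite dimensional algebra over an algebraically closed field K, let T be a functorially finite torsion class in mod(A), and let A →φ T₀ → T₁ → 0 be an exact sequence in which φ is a minimal left T-approximation of the regular module A. Then every epimorphism p': X' → T₀ in mod(A) with X' in add(T₀) splits; consequently every module in add(T₀) is split projective in T. -/

import Mathlib

open CategoryTheory

section Defs

variable (K : Type) [Field K] (A : Type) [Ring A] [Algebra K A]

/-- An `A`-module is in `mod(A)` if it is finite dimensional over `K`
(via restriction of scalars along `K → A`). -/
def modCls : Set (ModuleCat A) :=
  {M | @FiniteDimensional K (RestrictScalars K A M) _ _ (RestrictScalars.module K A M)}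

variable {A}

/-- A class of modules is replete (closed under isomorphisms). -/
def IsoClosed (C : Set (ModuleCat A)) : Prop :=
  ∀ ⦃M N : ModuleCat A⦄, (M ≅ N) → M ∈ C → N ∈ C

/-- Closed under quotients. -/
def QuotClosed (C : Set (ModuleCat A)) : Prop :=
  ∀ ⦃M N : ModuleCat A⦄ (f : M ⟶ N), Function.Surjective f → M ∈ C → N ∈ C

/-- Closed under extensions. -/
def ExtClosed (C : Set (ModuleCat A)) : Prop :=
  ∀ ⦃M E N : ModuleCat A⦄ (f : M ⟶ E) (g : E ⟶ N),
    Function.Injective f → Function.Surjective g → Function.Exact f g →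
    M ∈ C → N ∈ C → E ∈ C

/-- Closed under kernels. -/
def KerClosed (C : Set (ModuleCat A)) : Prop :=
  ∀ ⦃M N : ModuleCat A⦄ (f : M ⟶ N), M ∈ C → N ∈ C →
    ModuleCat.of A ↥(LinearMap.ker f.hom) ∈ C

/-- Closed under cokernels. -/
def CokerClosed (C : Set (ModuleCat A)) : Prop :=
  ∀ ⦃M N : ModuleCat A⦄ (f : M ⟶ N), M ∈ C → N ∈ C →
    ModuleCat.of A (N ⧸ LinearMap.range f.hom) ∈ C

variable (A)

/-- A wide subcategory of `mod(A)`: a replete class of finite dimensional modules closed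
under kernels, cokernels and extensions. -/
def IsWide (C : Set (ModuleCat A)) : Prop :=
  C ⊆ modCls K A ∧ IsoClosed C ∧ KerClosed C ∧ CokerClosed C ∧ ExtClosed C

/-- A torsion class in `mod(A)`: a replete class of finite dimensional modules closed
under quotients and extensions. -/
def IsTorsionClass (C : Set (ModuleCat A)) : Prop :=
  C ⊆ modCls K A ∧ IsoClosed C ∧ QuotClosed C ∧ ExtClosed C

variable {A}

/-- `gen C`: all quotients of finite direct sums of objects of `C`. -/
def gen (C : Set (ModuleCat A)) : Set (ModuleCat A) :=
  {X | ∃ (n : ℕ) (M : Fin n → ModuleCat A) (_ : ∀ i, M i ∈ C)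
      (f : ModuleCat.of A (∀ i, M i) ⟶ X), Function.Surjective f}

/-- Modules admitting a `C`-filtration `0 = F 0 ⊆ F 1 ⊆ ⋯ ⊆ F n = X` of length exactly `n`,
with all subquotients `F (i+1) / F i` in `C`. -/
def filtLen (C : Set (ModuleCat A)) (n : ℕ) : Set (ModuleCat A) :=
  {X | ∃ F : Fin (n + 1) → Submodule A X,
      Monotone F ∧ F 0 = ⊥ ∧ F (Fin.last n) = ⊤ ∧
      ∀ i : Fin n, ModuleCat.of A
        (↥(F i.succ) ⧸ Submodule.comap (F i.succ).subtype (F i.castSucc)) ∈ C}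

/-- `filt C`: all modules admitting a finite filtration with subquotients in `C`. -/
def filt (C : Set (ModuleCat A)) : Set (ModuleCat A) :=
  {X | ∃ n, X ∈ filtLen C n}

/-- `C^{⋆n}`: modules with a `C`-filtration of length at most `n`. -/
def filtAtMost (C : Set (ModuleCat A)) (n : ℕ) : Set (ModuleCat A) :=
  {X | ∃ m ≤ n, X ∈ filtLen C m}

/-- `α(T)`: the modules `X ∈ T` such that for every map `g : Y → X` with `Y ∈ T`,
the kernel of `g` is again in `T`. -/
def alpha (T : Set (ModuleCat A)) : Set (ModuleCat A) :=
  {X | X ∈ T ∧ ∀ ⦃Y : ModuleCat A⦄ (g : Y ⟶ X), Y ∈ T →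
      ModuleCat.of A ↥(LinearMap.ker g.hom) ∈ T}

/-- `g : X ⟶ C₁` is a left `C`-approximation of `X`. -/
def IsLeftApprox (C : Set (ModuleCat A)) {X C₁ : ModuleCat A} (g : X ⟶ C₁) : Prop :=
  C₁ ∈ C ∧ ∀ ⦃C' : ModuleCat A⦄ (h : X ⟶ C'), C' ∈ C → ∃ k : C₁ ⟶ C', g ≫ k = h

/-- `g : C₂ ⟶ X` is a right `C`-approximation of `X`. -/
def IsRightApprox (C : Set (ModuleCat A)) {C₂ X : ModuleCat A} (g : C₂ ⟶ X) : Prop :=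
  C₂ ∈ C ∧ ∀ ⦃C' : ModuleCat A⦄ (h : C' ⟶ X), C' ∈ C → ∃ k : C' ⟶ C₂, k ≫ g = h

/-- A left approximation is (left) minimal if every endomorphism compatible with it is an
isomorphism. -/
def IsMinimalLeftApprox (C : Set (ModuleCat A)) {X C₁ : ModuleCat A} (g : X ⟶ C₁) : Prop :=
  IsLeftApprox C g ∧ ∀ h : C₁ ⟶ C₁, g ≫ h = g → IsIso h

variable (A)

/-- A class `C` is functorially finite in `mod(A)` if every finite dimensional module has
both a left and a right `C`-approximation. -/
def FunctFinite (C : Set (ModuleCat A)) : Prop :=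
  ∀ X ∈ modCls K A, (∃ (C₁ : ModuleCat A) (g : X ⟶ C₁), IsLeftApprox C g) ∧
    (∃ (C₂ : ModuleCat A) (g : C₂ ⟶ X), IsRightApprox C g)

variable {A}

/-- `add M`: direct summands of finite direct sums of copies of `M`. -/
def addOf (M : ModuleCat A) : Set (ModuleCat A) :=
  {X | ∃ (n : ℕ) (i : X ⟶ ModuleCat.of A (Fin n → M)) (r : ModuleCat.of A (Fin n → M) ⟶ X),
      i ≫ r = 𝟙 X}

/-- `gen M`: quotients of finite direct sums of copies of `M`. -/
def genOf (M : ModuleCat A) : Set (ModuleCat A) :=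
  {X | ∃ (n : ℕ) (f : ModuleCat.of A (Fin n → M) ⟶ X), Function.Surjective f}

/-- `P` is split projective in `C`: `P ∈ C` and every epimorphism onto `P` from an
object of `C` splits. -/
def SplitProjIn (C : Set (ModuleCat A)) (P : ModuleCat A) : Prop :=
  P ∈ C ∧ ∀ ⦃M : ModuleCat A⦄ (f : M ⟶ P), M ∈ C → Function.Surjective f →
    ∃ s : P ⟶ M, s ≫ f = 𝟙 P

end Defs

section Aux

variable {A : Type} [Ring A]

/-- Power object `T₀^n`. -/
abbrev powOf (T₀ : ModuleCat A) (n : ℕ) : ModuleCat A := ModuleCat.of A (Fin n → T₀)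

/-- Every epimorphism in `T` onto `T₀` splits (base of the induction). -/
lemma split_onto_T0 {T : Set (ModuleCat A)} {T₀ : ModuleCat A}
    (φ : ModuleCat.of A A ⟶ T₀) (hφ : IsMinimalLeftApprox T φ)
    {M : ModuleCat A} (hM : M ∈ T) (f : M ⟶ T₀) (hf : Function.Surjective f) :
    ∃ s : T₀ ⟶ M, s ≫ f = 𝟙 T₀ := by
  obtain ⟨m₀, hm₀⟩ := hf (φ (1 : A))
  let u : ModuleCat.of A A ⟶ M := ModuleCat.ofHom
    { toFun := fun (a : A) => a • m₀
      map_add' := fun (a b : A) => add_smul a b m₀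
      map_smul' := fun (c : A) (a : A) => mul_smul c a m₀ }
  have hu : u ≫ f = φ := by
    refine ModuleCat.hom_ext (LinearMap.ext fun (a : A) => ?_)
    show f (a • m₀) = φ a
    rw [map_smul, hm₀, ← map_smul, smul_eq_mul, mul_one]
  obtain ⟨k, hk⟩ := hφ.1.2 u hM
  have hh : φ ≫ (k ≫ f) = φ := by rw [← Category.assoc, hk, hu]
  have := hφ.2 _ hh
  exact ⟨inv (k ≫ f) ≫ k, by rw [Category.assoc, IsIso.inv_hom_id]⟩

lemma powOf_mem {T : Set (ModuleCat A)} (hQ : QuotClosed T) (hE : ExtClosed T)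
    {T₀ : ModuleCat A} (hT₀ : T₀ ∈ T) : ∀ n, powOf T₀ n ∈ T := by
  intro n
  induction n with
  | zero =>
      have hsub : ∀ v w : Fin 0 → ↑T₀, v = w := fun v w => funext fun i => i.elim0
      exact hQ (0 : T₀ ⟶ powOf T₀ 0) (fun y => ⟨0, hsub _ _⟩) hT₀
  | succ n ih =>
      let fc : T₀ ⟶ powOf T₀ (n + 1) := ModuleCat.ofHom
        { toFun := fun x i => if i = Fin.last n then x else 0
          map_add' := fun x y => by
            funext i
            show (if i = Fin.last n then x + y else 0)
              = (if i = Fin.last n then x else 0) + (if i = Fin.last n then y else 0)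
            by_cases h : i = Fin.last n <;> simp [h]
          map_smul' := fun c x => by
            funext i
            show (if i = Fin.last n then c • x else 0)
              = c • (if i = Fin.last n then x else 0)
            by_cases h : i = Fin.last n <;> simp [h] }
      let gi : powOf T₀ (n + 1) ⟶ powOf T₀ n := ModuleCat.ofHom
        { toFun := fun v => Fin.init v
          map_add' := fun v w => rfl
          map_smul' := fun c v => rfl }
      have hinj : Function.Injective fc := by
        intro x y h
        have h1 : (if (Fin.last n : Fin (n + 1)) = Fin.last n then x else 0)
            = (if (Fin.last n : Fin (n + 1)) = Fin.last n then y else 0) :=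
          congrFun h (Fin.last n)
        rw [if_pos rfl, if_pos rfl] at h1
        exact h1
      have hsurj : Function.Surjective gi := by
        intro y
        refine ⟨fun k => if h : (k : ℕ) < n then y ⟨(k : ℕ), h⟩ else 0, funext fun j => ?_⟩
        show (if h : ((j.castSucc : Fin (n + 1)) : ℕ) < n
            then y ⟨((j.castSucc : Fin (n + 1)) : ℕ), h⟩ else 0) = y j
        rw [dif_pos (by simp)]
        congr 1
      have hex : Function.Exact fc gi := by
        intro v
        constructor
        · intro hv
          refine ⟨v (Fin.last n), funext fun i => ?_⟩
          refine Fin.lastCases ?_ (fun j => ?_) i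
          · show (if (Fin.last n : Fin (n + 1)) = Fin.last n then v (Fin.last n) else 0)
              = v (Fin.last n)
            rw [if_pos rfl]
          · have h0 : Fin.init v j = 0 := congrFun hv j
            show (if (j.castSucc : Fin (n + 1)) = Fin.last n then v (Fin.last n) else 0)
              = v j.castSucc
            rw [if_neg (Fin.castSucc_lt_last j).ne]
            exact h0.symm
        · rintro ⟨x, rfl⟩
          funext j
          show (if (j.castSucc : Fin (n + 1)) = Fin.last n then x else 0) = 0
          rw [if_neg (Fin.castSucc_lt_last j).ne]
      exact hE fc gi hinj hsurj hex hT₀ ih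

lemma split_onto_pow {T : Set (ModuleCat A)} {T₀ : ModuleCat A}
    (hQ : QuotClosed T)
    (hsplit : ∀ (M : ModuleCat A), M ∈ T → ∀ f : M ⟶ T₀, Function.Surjective f →
      ∃ s : T₀ ⟶ M, s ≫ f = 𝟙 T₀) :
    ∀ n (M : ModuleCat A), M ∈ T → ∀ f : M ⟶ powOf T₀ n, Function.Surjective f →
      ∃ s : powOf T₀ n ⟶ M, s ≫ f = 𝟙 (powOf T₀ n) := by
  intro n
  induction n with
  | zero =>
      intro M hM f hf
      refine ⟨0, ?_⟩
      ext v
      exact Fin.elim0 v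
  | succ n ih =>
      intro M hM f hf
      let Llast : (Fin (n + 1) → ↑T₀) →ₗ[A] ↑T₀ := LinearMap.proj (Fin.last n)
      let Linit : (Fin (n + 1) → ↑T₀) →ₗ[A] (Fin n → ↑T₀) :=
        { toFun := fun v => Fin.init v
          map_add' := fun v w => rfl
          map_smul' := fun c v => rfl }
      let f₂ : M ⟶ T₀ := f ≫ ModuleCat.ofHom Llast
      have hf₂ : Function.Surjective f₂ := by
        intro y
        obtain ⟨m, hm⟩ := hf (fun _ => y)
        exact ⟨m, by show (f m) (Fin.last n) = y; rw [hm]⟩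
      obtain ⟨s₂, hs₂⟩ := hsplit M hM f₂ hf₂
      have hs₂' : ∀ x, f₂ (s₂ x) = x := fun x => ConcreteCategory.congr_hom hs₂ x
      let N : ModuleCat A := ModuleCat.of A ↥(LinearMap.ker f₂.hom)
      let π : M ⟶ N := ModuleCat.ofHom
        { toFun := fun m => ⟨m - s₂ (f₂ m),
            LinearMap.mem_ker.mpr (by rw [map_sub, hs₂', sub_self])⟩
          map_add' := fun a b => Subtype.ext (by
            show (a + b) - s₂ (f₂ (a + b)) = (a - s₂ (f₂ a)) + (b - s₂ (f₂ b))
            rw [map_add, map_add]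
            abel)
          map_smul' := fun c a => Subtype.ext (by
            show c • a - s₂ (f₂ (c • a)) = c • (a - s₂ (f₂ a))
            rw [map_smul, map_smul, smul_sub]) }
      have hπ : Function.Surjective π := by
        rintro ⟨m, hm⟩
        refine ⟨m, Subtype.ext ?_⟩
        show m - s₂ (f₂ m) = m
        rw [LinearMap.mem_ker.mp hm, map_zero, sub_zero]
      have hN : N ∈ T := hQ π hπ hM
      let g : N ⟶ powOf T₀ n := ModuleCat.ofHom (Linit ∘ₗ f.hom ∘ₗ (LinearMap.ker f₂.hom).subtype)
      have hg : Function.Surjective g := by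
        intro y
        obtain ⟨m, hm⟩ := hf (Fin.snoc y 0)
        have hker : m ∈ LinearMap.ker f₂.hom :=
          LinearMap.mem_ker.mpr (by show (f m) (Fin.last n) = 0; rw [hm, Fin.snoc_last])
        refine ⟨⟨m, hker⟩, ?_⟩
        show Fin.init (f m) = y
        rw [hm, Fin.init_snoc]
      obtain ⟨t, ht⟩ := ih N hN g hg
      have ht' : ∀ y, g (t y) = y := fun y => ConcreteCategory.congr_hom ht y
      let s : powOf T₀ (n + 1) ⟶ M := ModuleCat.ofHom (
        (LinearMap.ker f₂.hom).subtype ∘ₗ t.hom ∘ₗ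
            (Linit - Linit ∘ₗ f.hom ∘ₗ s₂.hom ∘ₗ Llast)
          + s₂.hom ∘ₗ Llast)
      refine ⟨s, ?_⟩
      refine ModuleCat.hom_ext (LinearMap.ext fun v => ?_)
      show f (s v) = v
      rw [show s v = (LinearMap.ker f₂.hom).subtype
            (t (Linit v - Linit (f (s₂ (Llast v))))) + s₂ (Llast v) from rfl, map_add]
      funext i
      refine Fin.lastCases ?_ (fun j => ?_) i
      · have h1 : f₂ ((LinearMap.ker f₂.hom).subtype
            (t (Linit v - Linit (f (s₂ (Llast v)))))) = 0 :=
          LinearMap.mem_ker.mp (t (Linit v - Linit (f (s₂ (Llast v))))).2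
        have h2 : f₂ (s₂ (Llast v)) = Llast v := hs₂' _
        show f₂ ((LinearMap.ker f₂.hom).subtype
            (t (Linit v - Linit (f (s₂ (Llast v)))))) + f₂ (s₂ (Llast v)) = Llast v
        rw [h1, h2, zero_add]
      · have h1 : Linit (f ((LinearMap.ker f₂.hom).subtype
            (t (Linit v - Linit (f (s₂ (Llast v))))))) =
              Linit v - Linit (f (s₂ (Llast v))) :=
          ht' _
        show Linit (f ((LinearMap.ker f₂.hom).subtype
            (t (Linit v - Linit (f (s₂ (Llast v))))))) j
              + Linit (f (s₂ (Llast v))) j = Linit v j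
        rw [h1]
        simp

lemma addOf_subset {T : Set (ModuleCat A)} (hQ : QuotClosed T)
    {T₀ : ModuleCat A} (hpow : ∀ n, powOf T₀ n ∈ T) : addOf T₀ ⊆ T := by
  rintro X ⟨n, i, r, hir⟩
  exact hQ r (fun x => ⟨i x, ConcreteCategory.congr_hom hir x⟩) (hpow n)

end Aux

theorem split_projectives_from_minimal_approximation (K : Type) [Field K] [IsAlgClosed K] (A : Type) [Ring A] [Algebra K A]
    [FiniteDimensional K A]
    (T : Set (ModuleCat A))
    (hT : IsTorsionClass K A T) (hff : FunctFinite K A T)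
    (T₀ T₁ : ModuleCat A) (φ : ModuleCat.of A A ⟶ T₀) (ψ : T₀ ⟶ T₁)
    (hφ : IsMinimalLeftApprox T φ) (hψ : Function.Surjective ψ)
    (hexact : Function.Exact φ ψ) :
    (∀ X' ∈ addOf T₀, ∀ p' : X' ⟶ T₀, Function.Surjective p' →
      ∃ s : T₀ ⟶ X', s ≫ p' = 𝟙 T₀) ∧
    ∀ P ∈ addOf T₀, SplitProjIn T P := by
  obtain ⟨hsub, hiso, hQ, hE⟩ := hT
  have hT₀ : T₀ ∈ T := hφ.1.1
  have hpow : ∀ n, powOf T₀ n ∈ T := powOf_mem hQ hE hT₀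
  have hadd : addOf T₀ ⊆ T := addOf_subset hQ hpow
  have hsplit : ∀ (M : ModuleCat A), M ∈ T → ∀ f : M ⟶ T₀, Function.Surjective f →
      ∃ s : T₀ ⟶ M, s ≫ f = 𝟙 T₀ := fun M hM f hf => split_onto_T0 φ hφ hM f hf
  have hsplitpow := split_onto_pow hQ hsplit
  constructor
  · intro X' hX' p' hp'
    exact hsplit X' (hadd hX') p' hp'
  · rintro P hP
    obtain ⟨n, i, r, hir⟩ := hP
    have hir' : ∀ x, r (i x) = x := fun x => ConcreteCategory.congr_hom hir x
    refine ⟨hadd ⟨n, i, r, hir⟩, ?_⟩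
    intro M f hM hf
    let Q := powOf T₀ n
    let W : ModuleCat A := ModuleCat.of A (↑M × (Fin n → ↑T₀))
    let i' : ↑P →ₗ[A] (Fin n → ↑T₀) := i.hom
    let r' : (Fin n → ↑T₀) →ₗ[A] ↑P := r.hom
    let f' : ↑M →ₗ[A] ↑P := f.hom
    let ι : M ⟶ W := ModuleCat.ofHom (LinearMap.inl A ↑M (Fin n → ↑T₀))
    let pr : W ⟶ Q := ModuleCat.ofHom (LinearMap.snd A ↑M (Fin n → ↑T₀))
    have hW : W ∈ T :=
      hE ι pr LinearMap.inl_injective (fun q => ⟨(0, q), rfl⟩) Function.Exact.inl_snd hM (hpow n)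
    let g : W ⟶ Q := ModuleCat.ofHom (
      i' ∘ₗ f' ∘ₗ LinearMap.fst A ↑M (Fin n → ↑T₀)
        + LinearMap.snd A ↑M (Fin n → ↑T₀)
        - i' ∘ₗ r' ∘ₗ LinearMap.snd A ↑M (Fin n → ↑T₀))
    have hgval : ∀ (m : ↑M) (q : Fin n → ↑T₀), g (m, q) = i' (f' m) + q - i' (r' q) :=
      fun m q => rfl
    have hir'' : ∀ x, r' (i' x) = x := hir'
    have hg : Function.Surjective g := by
      intro q0
      let q : Fin n → ↑T₀ := q0
      obtain ⟨m, hm⟩ := hf (r' q)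
      have hm' : f' m = r' q := hm
      refine ⟨(m, q - i' (r' q)), ?_⟩
      show g (m, q - i' (r' q)) = q
      have hz : r' (q - i' (r' q)) = 0 := by rw [map_sub, hir'']; exact sub_self _
      rw [hgval, hm', hz, map_zero, sub_zero]
      abel
    obtain ⟨s, hs⟩ := hsplitpow n W hW g hg
    let s' : (Fin n → ↑T₀) →ₗ[A] (↑M × (Fin n → ↑T₀)) := s.hom
    have hs' : ∀ q, g (s' q) = q := fun q => ConcreteCategory.congr_hom hs q
    refine ⟨ModuleCat.ofHom (LinearMap.fst A ↑M (Fin n → ↑T₀) ∘ₗ s' ∘ₗ i'), ?_⟩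
    refine ModuleCat.hom_ext (LinearMap.ext fun p => ?_)
    show f' ((s' (i' p)).1) = p
    have h1 : g (s' (i' p)) = i' p := hs' (i' p)
    have h2 : i' (f' (s' (i' p)).1) + (s' (i' p)).2 - i' (r' (s' (i' p)).2) = i' p := by
      rw [← hgval]; exact h1
    have hir'' : ∀ x, r' (i' x) = x := hir'
    have h3 := congrArg r' h2
    rw [map_sub, map_add] at h3
    simp only [hir''] at h3
    simpa using h3
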